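/- With η a finite positive measure on a compact set E, λ ∉ E, d = dist(λ, E), for z ∉ D(λ, d/2) and 0 < ε < d/2 one has |(C_ε(η)(z) − C(η)(λ))/(z − λ)| ≤ 4/d, where C_ε(η) is the truncated Cauchy transform, C(η)(λ) = ∫ (s−λ)⁻¹ dη(s), provided ‖C_ε(η)‖_∞ ≤ 1 and |C(η)(λ)| ≤ 1. -/

import Mathlib

open MeasureTheory Set

/-- Second difference-quotient bound from the proof of Lemma 5.1: with η a finite
positive measure on the compact set E, λ ∉ E, d = dist(λ,E), if the truncated
Cauchy transforms of η are bounded by 1 and |C(η)(λ)| ≤ 1, then for z ∉ D(λ,d/2)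
and 0 < ε < d/2, |(C_ε(η)(z) − C(η)(λ))/(z − λ)| ≤ 4/d. -/
theorem cauchy_difference_quotient_bound_far
    (η : Measure ℂ) [IsFiniteMeasure η]
    (E : Set ℂ) (hE : IsCompact E) (hsupp : η Eᶜ = 0) (hEne : E.Nonempty)
    (lam : ℂ) (hlam : lam ∉ E) (d : ℝ) (hd : d = Metric.infDist lam E)
    (hdpos : 0 < d)
    (hCbd : ∀ (w : ℂ) (ε : ℝ), 0 < ε →
      ‖(∫ s in {u : ℂ | ε < ‖(u - w)‖}, (s - w)⁻¹ ∂η)‖ ≤ 1)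
    (hClam : ‖(∫ s, (s - lam)⁻¹ ∂η)‖ ≤ 1) :
    ∀ z : ℂ, z ∉ Metric.ball lam (d / 2) → ∀ ε : ℝ, 0 < ε → ε < d / 2 →
      ‖
        (((∫ s in {w : ℂ | ε < ‖(w - z)‖}, (s - z)⁻¹ ∂η) -
          ∫ s, (s - lam)⁻¹ ∂η) / (z - lam))‖ ≤ 4 / d := by
  intro z hz ε hε _
  have hdist : d / 2 ≤ ‖z - lam‖ := by
    have := Metric.mem_ball.not.mp hz
    rw [Complex.dist_eq] at this
    linarith [not_lt.mp this]
  have hzl : (0:ℝ) < ‖z - lam‖ := lt_of_lt_of_le (by linarith) hdist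
  rw [norm_div]
  have hnum : ‖((∫ s in {w : ℂ | ε < ‖(w - z)‖}, (s - z)⁻¹ ∂η) -
      ∫ s, (s - lam)⁻¹ ∂η)‖ ≤ 2 := by
    calc _ ≤ ‖(∫ s in {w : ℂ | ε < ‖(w - z)‖}, (s - z)⁻¹ ∂η)‖ +
          ‖(∫ s, (s - lam)⁻¹ ∂η)‖ := norm_sub_le _ _
      _ ≤ 1 + 1 := add_le_add (hCbd z ε hε) hClam
      _ = 2 := by norm_num
  rw [div_le_div_iff₀ hzl hdpos]
  calc ‖_‖ * d ≤ 2 * d := by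
        exact mul_le_mul_of_nonneg_right hnum hdpos.le
    _ = 4 * (d/2) := by ring
    _ ≤ 4 * ‖z - lam‖ := by linarith
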